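/- Let M be a diamond with atoms A, n ≥ 1, and f : M^n → ℝ submodular with f(0) = 0. Then min over x ∈ M^n of f(x) equals max of z(1_{M^n}) over all unified vectors z : [n] × A → ℝ with z ≤ 0 and z ∈ P_M(f). Moreover if f is integer-valued the maximum is attained by an integer-valued vector z. -/

import Mathlib

set_option linter.unreachableTactic false
set_option linter.unusedTactic false
set_option linter.unusedVariables false

inductive Dia (A : Type) : Type where
  | bot : Dia A
  | atom : A → Dia A
  | top : Dia A
  deriving DecidableEq

namespace Dia

variable {A : Type} [DecidableEq A]

instance : Lattice (Dia A) where
  le x y := x = bot ∨ y = top ∨ x = y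
  le_refl x := Or.inr (Or.inr rfl)
  le_trans x y z hxy hyz := by
    rcases hxy with h | h | h <;> rcases hyz with h' | h' | h' <;> simp_all
  le_antisymm x y hxy hyx := by
    rcases hxy with h | h | h <;> rcases hyx with h' | h' | h' <;> simp_all
  sup x y := if x = bot then y else if y = bot then x else if x = y then x else top
  inf x y := if x = top then y else if y = top then x else if x = y then x else bot
  le_sup_left x y := by
    try dsimp only
    split_ifs <;> (try simp_all) <;> (try split_ifs) <;> (try simp_all)
  le_sup_right x y := by
    try dsimp only
    split_ifs <;> (try simp_all) <;> (try split_ifs) <;> (try simp_all)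
  sup_le x y z hxz hyz := by
    try dsimp only
    rcases hxz with h | h | h <;> rcases hyz with h' | h' | h' <;> split_ifs <;> (try simp_all) <;> (try split_ifs) <;> (try simp_all)
  inf_le_left x y := by
    try dsimp only
    split_ifs <;> (try simp_all) <;> (try split_ifs) <;> (try simp_all)
  inf_le_right x y := by
    try dsimp only
    split_ifs <;> (try simp_all) <;> (try split_ifs) <;> (try simp_all)
  le_inf x y z hxy hxz := by
    try dsimp only
    rcases hxy with h | h | h <;> rcases hxz with h' | h' | h' <;> split_ifs <;> (try simp_all) <;> (try split_ifs) <;> (try simp_all)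

instance : BoundedOrder (Dia A) where
  top := top
  bot := bot
  le_top x := Or.inr (Or.inl rfl)
  bot_le x := Or.inl rfl

def drank : Dia A → ℕ
  | bot => 0
  | atom _ => 1
  | top => 2

noncomputable def gval (v : A → ℝ) : Dia A → ℝ
  | bot => 0
  | atom a => v a
  | top => sSup {r : ℝ | ∃ a a' : A, a ≠ a' ∧ r = v a + v a'}

end Dia

variable {A : Type} [DecidableEq A] {n : ℕ}

noncomputable def evalD (x : Fin n → A → ℝ) (y : Fin n → Dia A) : ℝ :=
  ∑ i, Dia.gval (x i) (y i)

def Submod (f : (Fin n → Dia A) → ℝ) : Prop :=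
  ∀ a b, f (a ⊓ b) + f (a ⊔ b) ≤ f a + f b

def InP (f : (Fin n → Dia A) → ℝ) (x : Fin n → A → ℝ) : Prop :=
  ∀ y, evalD x y ≤ f y

def UnifiedRow (v : A → ℝ) : Prop :=
  ∃ p : A, (∀ a b : A, a ≠ p → b ≠ p → v a = v b) ∧ ∀ a, v a ≤ v p

def Unified (x : Fin n → A → ℝ) : Prop := ∀ i, UnifiedRow (x i)


set_option linter.unusedSectionVars false

namespace Dia
variable {A : Type} [DecidableEq A]

lemma le_def (x y : Dia A) : x ≤ y ↔ (x = Dia.bot ∨ y = Dia.top ∨ x = y) := Iff.rfl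

lemma inf_def (x y : Dia A) : x ⊓ y = if x = Dia.top then y else if y = Dia.top then x else if x = y then x else Dia.bot := rfl

lemma sup_def (x y : Dia A) : x ⊔ y = if x = Dia.bot then y else if y = Dia.bot then x else if x = y then x else Dia.top := rfl

@[simp] lemma bot_inf (d : Dia A) : Dia.bot ⊓ d = Dia.bot := by
  rw [inf_def]; split_ifs <;> simp_all
@[simp] lemma inf_bot (d : Dia A) : d ⊓ Dia.bot = Dia.bot := by
  rw [inf_def]; split_ifs <;> simp_all
@[simp] lemma top_inf (d : Dia A) : Dia.top ⊓ d = d := by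
  rw [inf_def]; simp
@[simp] lemma inf_top (d : Dia A) : d ⊓ Dia.top = d := by
  rw [inf_def]; split_ifs <;> simp_all
@[simp] lemma bot_sup (d : Dia A) : Dia.bot ⊔ d = d := by
  rw [sup_def]; simp
@[simp] lemma sup_bot (d : Dia A) : d ⊔ Dia.bot = d := by
  rw [sup_def]; split_ifs <;> simp_all
@[simp] lemma top_sup (d : Dia A) : Dia.top ⊔ d = Dia.top := by
  rw [sup_def]; split_ifs <;> simp_all
@[simp] lemma sup_top (d : Dia A) : d ⊔ Dia.top = Dia.top := by
  rw [sup_def]; split_ifs <;> simp_all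
lemma atom_inf_atom {a b : A} (hab : a ≠ b) : Dia.atom a ⊓ Dia.atom b = Dia.bot := by
  rw [inf_def]; split_ifs <;> simp_all
lemma atom_sup_atom {a b : A} (hab : a ≠ b) : Dia.atom a ⊔ Dia.atom b = Dia.top := by
  rw [sup_def]; split_ifs <;> simp_all
@[simp] lemma inf_self (d : Dia A) : d ⊓ d = d := _root_.inf_idem d
@[simp] lemma sup_self (d : Dia A) : d ⊔ d = d := _root_.sup_idem d

@[simp] lemma gval_bot (v : A → ℝ) : gval v Dia.bot = 0 := rfl
@[simp] lemma gval_atom (v : A → ℝ) (a : A) : gval v (Dia.atom a) = v a := rfl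

instance [Fintype A] : Fintype (Dia A) where
  elems := {Dia.bot, Dia.top} ∪ Finset.univ.image Dia.atom
  complete := by intro x; cases x <;> simp

lemma gval_top_pair [Fintype A] (v : A → ℝ) (p : A)
    (hconst : ∀ a b : A, a ≠ p → b ≠ p → v a = v b) (hpeak : ∀ a, v a ≤ v p)
    {b : A} (hb : b ≠ p) : gval v Dia.top = v p + v b := by
  show sSup {r : ℝ | ∃ a a' : A, a ≠ a' ∧ r = v a + v a'} = v p + v b
  apply IsGreatest.csSup_eq
  constructor
  · exact ⟨p, b, Ne.symm hb, rfl⟩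
  · rintro r ⟨a, a', haa, rfl⟩
    by_cases hap : a = p
    · subst hap
      rw [hconst a' b (Ne.symm haa) hb]
    · by_cases hap' : a' = p
      · subst hap'
        rw [hconst a b hap hb]; linarith [hpeak b]
      · rw [hconst a b hap hb, hconst a' b hap' hb]
        linarith [hpeak b, hpeak p]

end Dia
section Aux
variable {A : Type} [DecidableEq A] [Fintype A]

lemma exists_ne_of_two (h2 : 1 < Fintype.card A) (p : A) : ∃ b : A, b ≠ p :=
  Fintype.exists_ne_of_one_lt_card h2 p

lemma unifiedRow_gval_top (h2 : 1 < Fintype.card A) {v : A → ℝ} (hu : UnifiedRow v) :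
    ∃ p b : A, b ≠ p ∧ (∀ a, v a ≤ v p) ∧ (∀ a, a ≠ p → v a = v b) ∧
      Dia.gval v Dia.top = v p + v b := by
  obtain ⟨p, hconst, hpeak⟩ := hu
  obtain ⟨b, hb⟩ := exists_ne_of_two h2 p
  exact ⟨p, b, hb, hpeak, fun a ha => hconst a b ha hb,
    Dia.gval_top_pair v p hconst hpeak hb⟩

lemma gval_top_le_gval (h2 : 1 < Fintype.card A) {v : A → ℝ} (hu : UnifiedRow v)
    (hneg : ∀ a, v a ≤ 0) (d : Dia A) : Dia.gval v Dia.top ≤ Dia.gval v d := by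
  obtain ⟨p, b, hb, hpeak, hconst, htop⟩ := unifiedRow_gval_top h2 hu
  cases d with
  | bot => rw [htop, Dia.gval_bot]; linarith [hneg p, hneg b]
  | top => rw [htop]
  | atom a =>
    rw [htop, Dia.gval_atom]
    by_cases hap : a = p
    · subst hap; linarith [hneg b]
    · rw [hconst a hap]; linarith [hneg p]

lemma gval_supermod (h2 : 1 < Fintype.card A) {v : A → ℝ} (hu : UnifiedRow v)
    (d d' : Dia A) :
    Dia.gval v d + Dia.gval v d' ≤ Dia.gval v (d ⊓ d') + Dia.gval v (d ⊔ d') := by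
  obtain ⟨p, b, hb, hpeak, hconst, htop⟩ := unifiedRow_gval_top h2 hu
  cases d with
  | bot => simp
  | top => simp [add_comm]
  | atom a =>
    cases d' with
    | bot => simp
    | top => simp [add_comm]
    | atom a' =>
      by_cases haa : a = a'
      · subst haa; simp
      · rw [Dia.atom_inf_atom haa, Dia.atom_sup_atom haa, Dia.gval_bot, htop,
          Dia.gval_atom, Dia.gval_atom]
        by_cases hap : a = p
        · subst hap; rw [hconst a' (Ne.symm haa)]; linarith
        · by_cases hap' : a' = p
          · subst hap'; rw [hconst a hap]; linarith
          · rw [hconst a hap, hconst a' hap']; linarith [hpeak b]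

end Aux
section OneDia
variable {A : Type} [DecidableEq A] [Fintype A]

lemma int_min {x y : ℝ} (hx : ∃ k : ℤ, x = k) (hy : ∃ k : ℤ, y = k) :
    ∃ k : ℤ, min x y = k := by
  rcases min_cases x y with ⟨h, _⟩ | ⟨h, _⟩ <;> rw [h] <;> assumption

lemma oneDia (hA : 3 ≤ Fintype.card A) (h H : Dia A → ℝ) (m : ℝ)
    (hb : h Dia.bot = 0)
    (hm : ∀ d, m ≤ H d)
    (hmex : ∃ d, H d = m)
    (MI : ∀ d d', h (d ⊓ d') + H (d ⊔ d') ≤ h d + H d')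
    (hsub : ∀ d d', h (d ⊓ d') + h (d ⊔ d') ≤ h d + h d') :
    ∃ v : A → ℝ, UnifiedRow v ∧ (∀ a, v a ≤ 0) ∧
      (∀ d, Dia.gval v d ≤ h d) ∧
      (∀ d, Dia.gval v d + (m - H d) ≤ Dia.gval v Dia.top) ∧
      (∃ d, H d = m ∧ Dia.gval v d = Dia.gval v Dia.top) ∧
      ((∀ d, ∃ k : ℤ, h d = k) → (∃ k : ℤ, m = k) → ∀ a, ∃ k : ℤ, v a = k) := by
  have hANe : Nonempty A := Fintype.card_pos_iff.mp (by omega)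
  have h2 : 1 < Fintype.card A := by omega
  have F1 : ∀ x y : A, x ≠ y → H Dia.top ≤ h (Dia.atom x) + H (Dia.atom y) := by
    intro x y hxy
    have := MI (Dia.atom x) (Dia.atom y)
    rw [Dia.atom_inf_atom hxy, Dia.atom_sup_atom hxy, hb] at this
    linarith
  have F2 : ∀ x : A, h (Dia.atom x) + H Dia.top ≤ h Dia.top + H (Dia.atom x) := by
    intro x
    have := MI Dia.top (Dia.atom x)
    rw [Dia.top_inf, Dia.top_sup] at this
    linarith
  have F3 : ∀ x : A, H (Dia.atom x) ≤ h (Dia.atom x) + H Dia.bot := by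
    intro x
    have := MI (Dia.atom x) Dia.bot
    rw [Dia.inf_bot, Dia.sup_bot, hb] at this
    linarith
  have F4 : H Dia.top ≤ h Dia.top + H Dia.bot := by
    have := MI Dia.top Dia.bot
    rw [Dia.inf_bot, Dia.sup_bot, hb] at this
    linarith
  have F5 : ∀ x y : A, x ≠ y → h Dia.top ≤ h (Dia.atom x) + h (Dia.atom y) := by
    intro x y hxy
    have := hsub (Dia.atom x) (Dia.atom y)
    rw [Dia.atom_inf_atom hxy, Dia.atom_sup_atom hxy, hb] at this
    linarith
  by_cases hc3 : H Dia.bot = m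
  · -- v = 0
    refine ⟨fun _ => 0, ⟨Classical.arbitrary A, fun _ _ _ _ => rfl, fun _ => le_refl 0⟩,
      fun _ => le_refl 0, ?_, ?_, ?_, ?_⟩
    · intro d
      cases d with
      | bot => rw [Dia.gval_bot, hb]
      | atom a =>
        rw [Dia.gval_atom]
        have := F3 a; have := hm (Dia.atom a); linarith
      | top =>
        rw [Dia.gval_top_pair (fun _ => 0) (Classical.arbitrary A) (fun _ _ _ _ => rfl)
          (fun _ => le_refl 0) (Fintype.exists_ne_of_one_lt_card h2 (Classical.arbitrary A)).choose_spec]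
        have := F4; have := hm Dia.top; linarith
    · intro d
      rw [Dia.gval_top_pair (fun _ => 0) (Classical.arbitrary A) (fun _ _ _ _ => rfl)
        (fun _ => le_refl 0) (Fintype.exists_ne_of_one_lt_card h2 (Classical.arbitrary A)).choose_spec]
      have h1 : Dia.gval (fun _ => (0:ℝ)) d ≤ 0 := by
        cases d with
        | bot => rw [Dia.gval_bot]
        | atom a => rw [Dia.gval_atom]
        | top =>
          rw [Dia.gval_top_pair (fun _ => 0) (Classical.arbitrary A) (fun _ _ _ _ => rfl)
            (fun _ => le_refl 0) (Fintype.exists_ne_of_one_lt_card h2 (Classical.arbitrary A)).choose_spec]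
          norm_num
      have := hm d; linarith
    · refine ⟨Dia.bot, hc3, ?_⟩
      rw [Dia.gval_bot, Dia.gval_top_pair (fun _ => 0) (Classical.arbitrary A) (fun _ _ _ _ => rfl)
        (fun _ => le_refl 0) (Fintype.exists_ne_of_one_lt_card h2 (Classical.arbitrary A)).choose_spec]
      norm_num
    · intro _ _ a; exact ⟨0, by norm_num⟩
  · by_cases hc2 : ∃ q, H (Dia.atom q) = m
    · -- case 2 : an atom attains the minimum
      obtain ⟨q, hq⟩ := hc2
      obtain ⟨p, hp⟩ := Fintype.exists_ne_of_one_lt_card h2 q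
      have hp0 : 0 ≤ h (Dia.atom p) := by
        have := F1 p q hp; have := hm Dia.top; linarith
      set I : ℝ := Finset.univ.inf' Finset.univ_nonempty (fun a => h (Dia.atom a)) with hI
      set c : ℝ := min (min 0 I) (h Dia.top) with hc
      set v : A → ℝ := fun a => if a = p then 0 else c with hv
      have hvp : v p = 0 := by simp [hv]
      have hva : ∀ a, a ≠ p → v a = c := by intro a ha; simp [hv, ha]
      have hc0 : c ≤ 0 := le_trans (min_le_left _ _) (min_le_left _ _)
      have hcI : c ≤ I := le_trans (min_le_left _ _) (min_le_right _ _)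
      have hct : c ≤ h Dia.top := min_le_right _ _
      have hIa : ∀ a : A, I ≤ h (Dia.atom a) := by
        intro a; exact Finset.inf'_le _ (Finset.mem_univ a)
      have hconst : ∀ a b : A, a ≠ p → b ≠ p → v a = v b := by
        intro a b ha hb'; rw [hva a ha, hva b hb']
      have hpeak : ∀ a, v a ≤ v p := by
        intro a; by_cases hap : a = p
        · subst hap; exact le_refl _
        · rw [hva a hap, hvp]; exact hc0
      obtain ⟨b₀, hb₀⟩ := Fintype.exists_ne_of_one_lt_card h2 p
      have htopv : Dia.gval v Dia.top = c := by
        rw [Dia.gval_top_pair v p hconst hpeak hb₀, hvp, hva b₀ hb₀]; ring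
      refine ⟨v, ⟨p, hconst, hpeak⟩, ?_, ?_, ?_, ?_, ?_⟩
      · intro a; by_cases hap : a = p
        · subst hap; rw [hvp]
        · rw [hva a hap]; exact hc0
      · intro d
        cases d with
        | bot => rw [Dia.gval_bot, hb]
        | top => rw [htopv]; exact hct
        | atom a =>
          rw [Dia.gval_atom]
          by_cases hap : a = p
          · rw [hap, hvp]; exact hp0
          · rw [hva a hap]; exact le_trans hcI (hIa a)
      · intro d
        rw [htopv]
        cases d with
        | bot =>
          rw [Dia.gval_bot]
          have h1 : m - H Dia.bot ≤ c := by
            refine le_min (le_min ?_ ?_) ?_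
            · have := hm Dia.bot; linarith
            · refine Finset.le_inf' _ _ ?_
              intro a _
              have := F3 a; have := hm (Dia.atom a); linarith
            · have := F4; have := hm Dia.top; linarith
          linarith
        | top => rw [htopv]; have := hm Dia.top; linarith
        | atom a =>
          rw [Dia.gval_atom]
          by_cases hap : a = p
          · rw [hap, hvp]
            have h1 : m - H (Dia.atom p) ≤ c := by
              refine le_min (le_min ?_ ?_) ?_
              · have := hm (Dia.atom p); linarith
              · refine Finset.le_inf' _ _ ?_
                intro x _
                by_cases hxp : x = p
                · rw [hxp]; have := hm (Dia.atom p); linarith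
                · have := F1 x p hxp; have := hm Dia.top; linarith
              · have := F2 p; have := hm Dia.top; have := hm (Dia.atom p); linarith
            linarith
          · rw [hva a hap]; have := hm (Dia.atom a); linarith
      · refine ⟨Dia.atom q, hq, ?_⟩
        rw [Dia.gval_atom, hva q (Ne.symm hp), htopv]
      · intro hint hmint a
        have hIint : ∃ k : ℤ, I = k := by
          obtain ⟨x, _, hx⟩ := Finset.exists_mem_eq_inf' (Finset.univ_nonempty (α := A))
            (fun a => h (Dia.atom a))
          rw [hI, hx]; exact hint _
        have hcint : ∃ k : ℤ, c = k :=
          int_min (int_min ⟨0, by norm_num⟩ hIint) (hint _)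
        by_cases hap : a = p
        · rw [hap, hvp]; exact ⟨0, by norm_num⟩
        · rw [hva a hap]; exact hcint
    · -- case 1 : the top attains the minimum
      have hTt : H Dia.top = m := by
        obtain ⟨d, hd⟩ := hmex
        cases d with
        | bot => exact absurd hd hc3
        | atom q => exact absurd ⟨q, hd⟩ hc2
        | top => exact hd
      obtain ⟨p, -, hpmax⟩ := Finset.exists_max_image Finset.univ
        (fun a => h (Dia.atom a)) Finset.univ_nonempty
      obtain ⟨b₀, hb₀⟩ := Fintype.exists_ne_of_one_lt_card h2 p
      have htp2 : h Dia.top ≤ 2 * h (Dia.atom p) := by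
        have := F5 b₀ p hb₀
        have := hpmax b₀ (Finset.mem_univ b₀)
        linarith
      set w : ℝ := min 0 (h (Dia.atom p)) with hw
      set I : ℝ := Finset.univ.inf' Finset.univ_nonempty (fun a => h (Dia.atom a)) with hI
      set c : ℝ := min (min 0 I) (min (h Dia.top - w) w) with hc
      have hw0 : w ≤ 0 := min_le_left _ _
      have hwp : w ≤ h (Dia.atom p) := min_le_right _ _
      have hc0 : c ≤ 0 := le_trans (min_le_left _ _) (min_le_left _ _)
      have hcI : c ≤ I := le_trans (min_le_left _ _) (min_le_right _ _)
      have hctw : c ≤ h Dia.top - w := le_trans (min_le_right _ _) (min_le_left _ _)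
      have hcw : c ≤ w := le_trans (min_le_right _ _) (min_le_right _ _)
      have hIa : ∀ a : A, I ≤ h (Dia.atom a) := by
        intro a; exact Finset.inf'_le _ (Finset.mem_univ a)
      have hpHp : m ≤ h (Dia.atom p) + H (Dia.atom p) := by
        have := F2 p; linarith
      set v : A → ℝ := fun a => if a = p then w else c with hv
      have hvp : v p = w := by simp [hv]
      have hva : ∀ a, a ≠ p → v a = c := by intro a ha; simp [hv, ha]
      have hconst : ∀ a b : A, a ≠ p → b ≠ p → v a = v b := by
        intro a b ha hb'; rw [hva a ha, hva b hb']
      have hpeak : ∀ a, v a ≤ v p := by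
        intro a; by_cases hap : a = p
        · subst hap; exact le_refl _
        · rw [hva a hap, hvp]; exact hcw
      have htopv : Dia.gval v Dia.top = w + c := by
        rw [Dia.gval_top_pair v p hconst hpeak hb₀, hvp, hva b₀ hb₀]
      refine ⟨v, ⟨p, hconst, hpeak⟩, ?_, ?_, ?_, ?_, ?_⟩
      · intro a; by_cases hap : a = p
        · subst hap; rw [hvp]; exact hw0
        · rw [hva a hap]; exact hc0
      · intro d
        cases d with
        | bot => rw [Dia.gval_bot, hb]
        | top => rw [htopv]; linarith
        | atom a =>
          rw [Dia.gval_atom]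
          by_cases hap : a = p
          · rw [hap, hvp]; exact hwp
          · rw [hva a hap]; exact le_trans hcI (hIa a)
      · intro d
        rw [htopv]
        cases d with
        | top => rw [htopv]; have := hm Dia.top; linarith
        | atom a =>
          rw [Dia.gval_atom]
          by_cases hap : a = p
          · rw [hap, hvp]
            have h1 : m - H (Dia.atom p) ≤ c := by
              refine le_min (le_min ?_ ?_) (le_min ?_ ?_)
              · have := hm (Dia.atom p); linarith
              · refine Finset.le_inf' _ _ ?_
                intro x _
                by_cases hxp : x = p
                · rw [hxp]; linarith
                · have := F1 x p hxp; linarith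
              · rcases min_cases 0 (h (Dia.atom p)) with ⟨h', h''⟩ | ⟨h', h''⟩
                · rw [hw, h']; have := F2 p; linarith
                · rw [hw, h']; have := F2 p; linarith
              · refine le_min ?_ ?_
                · have := hm (Dia.atom p); linarith
                · linarith
            linarith
          · rw [hva a hap]
            have h1 : m - H (Dia.atom a) ≤ w := by
              refine le_min ?_ ?_
              · have := hm (Dia.atom a); linarith
              · have := F1 p a (Ne.symm hap); linarith
            linarith
        | bot =>
          rw [Dia.gval_bot]
          have h1 : m - H Dia.bot - w ≤ c := by
            refine le_min (le_min ?_ ?_) (le_min ?_ ?_)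
            · have hw1 : m - H Dia.bot ≤ w := by
                refine le_min ?_ ?_
                · have := hm Dia.bot; linarith
                · have := F3 p; have := hm (Dia.atom p); linarith
              linarith
            · refine Finset.le_inf' _ _ ?_
              intro x _
              rcases min_cases 0 (h (Dia.atom p)) with ⟨h', h''⟩ | ⟨h', h''⟩
              · rw [hw, h']
                have := F3 x; have := hm (Dia.atom x); linarith
              · rw [hw, h']
                have hxx : h Dia.top ≤ h (Dia.atom x) + h (Dia.atom p) := by
                  by_cases hxp : x = p
                  · subst hxp; linarith
                  · exact F5 x p hxp
                have := F4; linarith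
            · have := F4; linarith
            · rcases min_cases 0 (h (Dia.atom p)) with ⟨h', h''⟩ | ⟨h', h''⟩
              · rw [hw, h']; have := hm Dia.bot; linarith
              · rw [hw, h']; have := F4; linarith
          linarith
      · exact ⟨Dia.top, hTt, rfl⟩
      · intro hint hmint a
        have hIint : ∃ k : ℤ, I = k := by
          obtain ⟨x, _, hx⟩ := Finset.exists_mem_eq_inf' (Finset.univ_nonempty (α := A))
            (fun a => h (Dia.atom a))
          rw [hI, hx]; exact hint _
        have hwint : ∃ k : ℤ, w = k := int_min ⟨0, by norm_num⟩ (hint _)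
        have hcint : ∃ k : ℤ, c = k := by
          refine int_min (int_min ⟨0, by norm_num⟩ hIint) (int_min ?_ hwint)
          obtain ⟨kw, hkw⟩ := hwint
          obtain ⟨kt, hkt⟩ := hint Dia.top
          exact ⟨kt - kw, by rw [hkt, hkw]; push_cast; ring⟩
        by_cases hap : a = p
        · rw [hap, hvp]; exact hwint
        · rw [hva a hap]; exact hcint

end OneDia
section Main
variable {A : Type} [DecidableEq A] [Fintype A]

instance : Nonempty (Dia A) := ⟨Dia.bot⟩

lemma snoc_inf {n : ℕ} (y y' : Fin n → Dia A) (d d' : Dia A) :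
    (Fin.snoc y d ⊓ Fin.snoc y' d' : Fin (n+1) → Dia A) = Fin.snoc (y ⊓ y') (d ⊓ d') := by
  funext i
  refine Fin.lastCases ?_ ?_ i
  · simp [Fin.snoc_last]
  · intro j; simp [Fin.snoc_castSucc]

lemma snoc_sup {n : ℕ} (y y' : Fin n → Dia A) (d d' : Dia A) :
    (Fin.snoc y d ⊔ Fin.snoc y' d' : Fin (n+1) → Dia A) = Fin.snoc (y ⊔ y') (d ⊔ d') := by
  funext i
  refine Fin.lastCases ?_ ?_ i
  · simp [Fin.snoc_last]
  · intro j; simp [Fin.snoc_castSucc]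

lemma snoc_const {n : ℕ} (d : Dia A) :
    (Fin.snoc (fun _ => d) d : Fin (n+1) → Dia A) = fun _ => d := by
  funext i
  refine Fin.lastCases ?_ ?_ i
  · simp [Fin.snoc_last]
  · intro j; simp [Fin.snoc_castSucc]

lemma inf_bot_fun {n : ℕ} (y : Fin n → Dia A) :
    ((fun _ => Dia.bot) ⊓ y : Fin n → Dia A) = fun _ => Dia.bot := by
  funext i; simp [Pi.inf_apply]

lemma sup_bot_fun {n : ℕ} (y : Fin n → Dia A) :
    ((fun _ => Dia.bot) ⊔ y : Fin n → Dia A) = y := by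
  funext i; simp [Pi.sup_apply]

lemma evalD_snoc {n : ℕ} (z : Fin n → A → ℝ) (v : A → ℝ) (y : Fin (n+1) → Dia A) :
    evalD (Fin.snoc z v) y
      = evalD z (fun j => y j.castSucc) + Dia.gval v (y (Fin.last n)) := by
  unfold evalD
  rw [Fin.sum_univ_castSucc]
  simp [Fin.snoc_castSucc, Fin.snoc_last]

lemma mainLemma (hA : 3 ≤ Fintype.card A) :
    ∀ (n : ℕ) (f : (Fin n → Dia A) → ℝ), Submod f → f (fun _ => Dia.bot) = 0 →
      ∃ z : Fin n → A → ℝ, InP f z ∧ (∀ i a, z i a ≤ 0) ∧ Unified z ∧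
        IsLeast (Set.range f) (evalD z (fun _ => Dia.top)) ∧
        ((∀ t, ∃ k : ℤ, f t = (k : ℝ)) → ∀ i a, ∃ k : ℤ, z i a = (k : ℝ)) := by
  have h2 : 1 < Fintype.card A := by omega
  intro n
  induction n with
  | zero =>
    intro f hf h0
    have hy : ∀ y : Fin 0 → Dia A, y = fun _ => Dia.bot :=
      fun y => funext fun i => i.elim0
    have he : ∀ (z : Fin 0 → A → ℝ) (y : Fin 0 → Dia A), evalD z y = 0 := by
      intro z y; simp [evalD]
    refine ⟨fun _ _ => 0, ?_, ?_, ?_, ?_, ?_⟩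
    · intro y; rw [he, hy y, h0]
    · intro i; exact i.elim0
    · intro i; exact i.elim0
    · rw [he]
      exact ⟨⟨_, h0⟩, by rintro r ⟨y, rfl⟩; rw [hy y, h0]⟩
    · intro _ i; exact i.elim0
  | succ n ih =>
    intro f hf h0
    set h : Dia A → ℝ := fun d => f (Fin.snoc (fun _ => Dia.bot) d) with hh
    set H : Dia A → ℝ := fun d =>
      Finset.univ.inf' Finset.univ_nonempty
        (fun y : Fin n → Dia A => f (Fin.snoc y d)) with hH
    set m : ℝ := Finset.univ.inf' Finset.univ_nonempty f with hm
    have hm_le : ∀ x, m ≤ f x := fun x => Finset.inf'_le _ (Finset.mem_univ x)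
    have hm_ex : ∃ x, f x = m := by
      obtain ⟨x, _, hx⟩ := Finset.exists_mem_eq_inf'
        (Finset.univ_nonempty (α := Fin (n+1) → Dia A)) f
      exact ⟨x, hx.symm⟩
    have hH_le : ∀ (d : Dia A) (y : Fin n → Dia A), H d ≤ f (Fin.snoc y d) :=
      fun d y => Finset.inf'_le _ (Finset.mem_univ y)
    have hH_ex : ∀ d : Dia A, ∃ y, f (Fin.snoc y d) = H d := by
      intro d
      obtain ⟨y, _, hy⟩ := Finset.exists_mem_eq_inf'
        (Finset.univ_nonempty (α := Fin n → Dia A)) (fun y => f (Fin.snoc y d))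
      exact ⟨y, hy.symm⟩
    have hmH : ∀ d, m ≤ H d := by
      intro d
      obtain ⟨y, hy⟩ := hH_ex d
      rw [← hy]; exact hm_le _
    have hmex' : ∃ d, H d = m := by
      obtain ⟨x, hx⟩ := hm_ex
      refine ⟨x (Fin.last n), le_antisymm ?_ (hmH _)⟩
      have h1 : Fin.snoc (fun j => x (Fin.castSucc j)) (x (Fin.last n)) = x :=
        Fin.snoc_init_self x
      calc H (x (Fin.last n)) ≤ f (Fin.snoc (fun j => x (Fin.castSucc j)) (x (Fin.last n))) :=
            hH_le _ _
        _ = m := by rw [h1, hx]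
    have hb : h Dia.bot = 0 := by
      rw [hh]; simp only []
      rw [snoc_const, h0]
    have MI : ∀ d d', h (d ⊓ d') + H (d ⊔ d') ≤ h d + H d' := by
      intro d d'
      obtain ⟨y', hy'⟩ := hH_ex d'
      have hsm := hf (Fin.snoc (fun _ => Dia.bot) d) (Fin.snoc y' d')
      rw [snoc_inf, snoc_sup, inf_bot_fun, sup_bot_fun] at hsm
      have h1 := hH_le (d ⊔ d') y'
      rw [hh]; simp only []
      rw [← hy']
      calc f (Fin.snoc (fun _ => Dia.bot) (d ⊓ d')) + H (d ⊔ d')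
          ≤ f (Fin.snoc (fun _ => Dia.bot) (d ⊓ d')) + f (Fin.snoc y' (d ⊔ d')) := by linarith
        _ ≤ _ := hsm
    have hsubh : ∀ d d', h (d ⊓ d') + h (d ⊔ d') ≤ h d + h d' := by
      intro d d'
      have hsm := hf (Fin.snoc (fun _ => Dia.bot) d) (Fin.snoc (fun _ => Dia.bot) d')
      rw [snoc_inf, snoc_sup, inf_bot_fun, sup_bot_fun] at hsm
      exact hsm
    obtain ⟨v, hvU, hvneg, hvA, hvB, hvtight, hvint⟩ :=
      oneDia hA h H m hb hmH hmex' MI hsubh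
    set g : (Fin n → Dia A) → ℝ := fun y =>
      Finset.univ.inf' Finset.univ_nonempty
        (fun d : Dia A => f (Fin.snoc y d) - Dia.gval v d) with hg
    have hg_le : ∀ (y : Fin n → Dia A) (d : Dia A),
        g y ≤ f (Fin.snoc y d) - Dia.gval v d :=
      fun y d => Finset.inf'_le _ (Finset.mem_univ d)
    have hg_ex : ∀ y : Fin n → Dia A, ∃ d, f (Fin.snoc y d) - Dia.gval v d = g y := by
      intro y
      obtain ⟨d, _, hd⟩ := Finset.exists_mem_eq_inf'
        (Finset.univ_nonempty (α := Dia A)) (fun d => f (Fin.snoc y d) - Dia.gval v d)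
      exact ⟨d, hd.symm⟩
    have hgsub : Submod g := by
      intro y y'
      obtain ⟨d, hd⟩ := hg_ex y
      obtain ⟨d', hd'⟩ := hg_ex y'
      have hsup := gval_supermod h2 hvU d d'
      have hsm := hf (Fin.snoc y d) (Fin.snoc y' d')
      rw [snoc_inf, snoc_sup] at hsm
      have g1 := hg_le (y ⊓ y') (d ⊓ d')
      have g2 := hg_le (y ⊔ y') (d ⊔ d')
      linarith
    have hgbot : g (fun _ => Dia.bot) = 0 := by
      apply le_antisymm
      · have := hg_le (fun _ => Dia.bot) Dia.bot
        rw [snoc_const, h0, Dia.gval_bot] at this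
        linarith
      · refine Finset.le_inf' _ _ ?_
        intro d _
        have := hvA d
        rw [hh] at this
        simp only [] at this ⊢
        linarith
    obtain ⟨z', hz'P, hz'neg, hz'U, hz'least, hz'int⟩ := ih g hgsub hgbot
    have hgleast : IsLeast (Set.range g) (m - Dia.gval v Dia.top) := by
      constructor
      · obtain ⟨ds, hdsm, hdst⟩ := hvtight
        obtain ⟨ys, hys⟩ := hH_ex ds
        refine ⟨ys, le_antisymm ?_ ?_⟩
        · have := hg_le ys ds
          rw [hys, hdsm, hdst] at this
          linarith
        · obtain ⟨d, hd⟩ := hg_ex ys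
          have h1 := hvB d
          have h2' := hH_le d ys
          linarith [hd]
      · rintro r ⟨y, rfl⟩
        obtain ⟨d, hd⟩ := hg_ex y
        have h1 := hvB d
        have h2' := hH_le d y
        linarith [hd]
    have hz'top : evalD z' (fun _ => Dia.top) = m - Dia.gval v Dia.top :=
      hz'least.unique hgleast
    refine ⟨Fin.snoc z' v, ?_, ?_, ?_, ?_, ?_⟩
    · intro y
      rw [evalD_snoc]
      have h1 := hz'P (fun j => y j.castSucc)
      have h2' := hg_le (fun j => y j.castSucc) (y (Fin.last n))
      have h3 : Fin.snoc (fun j => y (Fin.castSucc j)) (y (Fin.last n)) = y :=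
        Fin.snoc_init_self y
      rw [h3] at h2'
      linarith
    · intro i a
      refine Fin.lastCases ?_ ?_ i
      · rw [Fin.snoc_last]; exact hvneg a
      · intro j; rw [Fin.snoc_castSucc]; exact hz'neg j a
    · intro i
      refine Fin.lastCases ?_ ?_ i
      · rw [Fin.snoc_last]; exact hvU
      · intro j; rw [Fin.snoc_castSucc]; exact hz'U j
    · have htopval : evalD (Fin.snoc z' v) (fun _ => Dia.top) = m := by
        rw [evalD_snoc, hz'top]; ring
      rw [htopval]
      constructor
      · obtain ⟨x, hx⟩ := hm_ex; exact ⟨x, hx⟩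
      · rintro r ⟨x, rfl⟩; exact hm_le x
    · intro hfint i a
      have hint_h : ∀ d, ∃ k : ℤ, h d = (k : ℝ) := fun d => hfint _
      have hint_m : ∃ k : ℤ, m = (k : ℝ) := by
        obtain ⟨x, hx⟩ := hm_ex
        rw [← hx]; exact hfint x
      have hvi := hvint hint_h hint_m
      have hgvi : ∀ d, ∃ k : ℤ, Dia.gval v d = (k : ℝ) := by
        intro d
        cases d with
        | bot => exact ⟨0, by simp⟩
        | atom a => exact hvi a
        | top =>
          obtain ⟨p, b, hbp, _, _, htopeq⟩ := unifiedRow_gval_top h2 hvU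
          obtain ⟨k1, hk1⟩ := hvi p
          obtain ⟨k2, hk2⟩ := hvi b
          exact ⟨k1 + k2, by rw [htopeq, hk1, hk2]; push_cast; ring⟩
      have hgint : ∀ t, ∃ k : ℤ, g t = (k : ℝ) := by
        intro y
        obtain ⟨d, hd⟩ := hg_ex y
        obtain ⟨k1, hk1⟩ := hfint (Fin.snoc y d)
        obtain ⟨k2, hk2⟩ := hgvi d
        exact ⟨k1 - k2, by rw [← hd, hk1, hk2]; push_cast; ring⟩
      have hz'i := hz'int hgint
      refine Fin.lastCases ?_ ?_ i
      · rw [Fin.snoc_last]; exact hvi a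
      · intro j; rw [Fin.snoc_castSucc]; exact hz'i j a

end Main
/-- the min--max theorem for submodular functions over diamonds. -/
theorem stmt4 [Fintype A] (hA : 3 ≤ Fintype.card A) (hn : 0 < n)
    (f : (Fin n → Dia A) → ℝ) (hf : Submod f)
    (h0 : f (fun _ => Dia.bot) = 0) :
    ∃ m : ℝ, IsLeast (Set.range f) m ∧
      IsGreatest {r : ℝ | ∃ z : Fin n → A → ℝ, InP f z ∧ (∀ i a, z i a ≤ 0) ∧
        Unified z ∧ r = evalD z (fun _ => Dia.top)} m ∧
      ((∀ t, ∃ k : ℤ, f t = (k : ℝ)) →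
        ∃ z : Fin n → A → ℝ, InP f z ∧ (∀ i a, z i a ≤ 0) ∧ Unified z ∧
          evalD z (fun _ => Dia.top) = m ∧ ∀ i a, ∃ k : ℤ, z i a = (k : ℝ)) := by
  have h2 : 1 < Fintype.card A := by omega
  obtain ⟨z, hzP, hzneg, hzU, hzleast, hzint⟩ := mainLemma hA n f hf h0
  refine ⟨evalD z (fun _ => Dia.top), hzleast, ⟨⟨z, hzP, hzneg, hzU, rfl⟩, ?_⟩, ?_⟩
  · rintro r ⟨w, hwP, hwneg, hwU, rfl⟩
    obtain ⟨x, hx⟩ := hzleast.1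
    have hle : evalD w (fun _ => Dia.top) ≤ evalD w x := by
      unfold evalD
      refine Finset.sum_le_sum ?_
      intro i _
      exact gval_top_le_gval h2 (hwU i) (hwneg i) (x i)
    calc evalD w (fun _ => Dia.top) ≤ evalD w x := hle
      _ ≤ f x := hwP x
      _ = evalD z (fun _ => Dia.top) := hx
  · intro hfint
    exact ⟨z, hzP, hzneg, hzU, rfl, hzint hfint⟩
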